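/- Case 5 estimate: choose δ > 0 small enough that r(δ) < ε and E|Y_{μ₂+δ}¹ − Y_{μ₂}¹| < ε. Then for any stopping strategy ρ = (ρ₀, ρ₁) ∈ 𝔗, on the event A₅ := {ρ₀ ≥ μ₁∧μ₂ + δ} ∩ {μ₁ > μ₂} one has E[U¹(ρ[τ*], τ*[ρ]) 1_{A₅}] = E[U¹(ρ₁(μ₂), μ₂) 1_{A₅}] ≤ E[Y_{μ₂}¹ 1_{A₅}] + 3ε = E[(W_{μ₁}¹ 1_{μ₁≤μ₂} + Y_{μ₂}¹ 1_{μ₁>μ₂}) 1_{A₅}] + 3ε. -/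

import Mathlib

/-!
Common setup for "On the non-zero-sum stopping game ending at the maximum of the stopping
strategies".  Time is indexed by `[0,∞] = ℝ≥0∞`.  Since `Ω` is at most countable and `ℙ`
charges every point, essential suprema/infima over families of stopping times coincide with
the pointwise ones, which is how they are formalized below.
-/

open MeasureTheory Filter Set
open scoped ENNReal Topology

noncomputable section

namespace StoppingGames

variable {Ω : Type*} [mΩ : MeasurableSpace Ω]

/-- `|a - b|` on `[0,∞]`, via truncated subtraction. -/
def dd (a b : ℝ≥0∞) : ℝ≥0∞ := (a - b) + (b - a)

/-- `𝒯`, the set of stopping times with values in `[0,∞]`. -/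
def ST (𝓕 : Filtration ℝ≥0∞ mΩ) : Set (Ω → ℝ≥0∞) := {τ | IsStoppingTime 𝓕 (fun ω => (τ ω : WithTop ℝ≥0∞))}

/-- `𝒯_σ`, the stopping times no less than `σ`. -/
def STge (𝓕 : Filtration ℝ≥0∞ mΩ) (σ : Ω → ℝ≥0∞) : Set (Ω → ℝ≥0∞) :=
  {τ | IsStoppingTime 𝓕 (fun ω => (τ ω : WithTop ℝ≥0∞)) ∧ ∀ ω, σ ω ≤ τ ω}

/-- `𝒯_{t+}`, the stopping times strictly greater than `t`. -/
def STgt (𝓕 : Filtration ℝ≥0∞ mΩ) (t : ℝ≥0∞) : Set (Ω → ℝ≥0∞) :=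
  {τ | IsStoppingTime 𝓕 (fun ω => (τ ω : WithTop ℝ≥0∞)) ∧ ∀ ω, t < τ ω}

/-- The class `𝕋` of jointly measurable maps `φ : [0,∞] × Ω → [0,∞]` with
`φ(t,·) ∈ 𝒯_{t+}` for every finite `t`. -/
def IsTT (𝓕 : Filtration ℝ≥0∞ mΩ) (φ : ℝ≥0∞ → Ω → ℝ≥0∞) : Prop :=
  Measurable (Function.uncurry φ) ∧ ∀ t : ℝ≥0∞, t ≠ ∞ → φ t ∈ STgt 𝓕 t

/-- A stopping strategy `ρ = (ρ₀, ρ₁) ∈ 𝔗`. -/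
def IsStrategy (𝓕 : Filtration ℝ≥0∞ mΩ) (ρ : (Ω → ℝ≥0∞) × (ℝ≥0∞ → Ω → ℝ≥0∞)) : Prop :=
  IsStoppingTime 𝓕 (fun ω => (ρ.1 ω : WithTop ℝ≥0∞)) ∧ IsTT 𝓕 ρ.2

/-- `𝔗_σ`, the stopping strategies whose first component is `≥ σ`. -/
def IsStrategyGe (𝓕 : Filtration ℝ≥0∞ mΩ) (σ : Ω → ℝ≥0∞)
    (ρ : (Ω → ℝ≥0∞) × (ℝ≥0∞ → Ω → ℝ≥0∞)) : Prop :=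
  IsStrategy 𝓕 ρ ∧ ∀ ω, σ ω ≤ ρ.1 ω

/-- `ρ[τ] = ρ₀ 1_{ρ₀ ≤ τ₀} + ρ₁(τ₀) 1_{ρ₀ > τ₀}`. -/
def play (ρ τ : (Ω → ℝ≥0∞) × (ℝ≥0∞ → Ω → ℝ≥0∞)) : Ω → ℝ≥0∞ := fun ω =>
  if ρ.1 ω ≤ τ.1 ω then ρ.1 ω else ρ.2 (τ.1 ω) ω

/-- `u(ρ,τ) = E[U(ρ[τ], τ[ρ])]`. -/
def payoff (μ : Measure Ω) (U : ℝ≥0∞ → ℝ≥0∞ → Ω → ℝ)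
    (ρ τ : (Ω → ℝ≥0∞) × (ℝ≥0∞ → Ω → ℝ≥0∞)) : ℝ :=
  ∫ ω, U (play ρ τ ω) (play τ ρ ω) ω ∂μ

/-- `u_σ(ρ,τ) = E[U(ρ[τ], τ[ρ]) | m]`. -/
def condPayoff (μ : Measure Ω) (m : MeasurableSpace Ω) (U : ℝ≥0∞ → ℝ≥0∞ → Ω → ℝ)
    (ρ τ : (Ω → ℝ≥0∞) × (ℝ≥0∞ → Ω → ℝ≥0∞)) : Ω → ℝ :=
  μ[fun ω => U (play ρ τ ω) (play τ ρ ω) ω | m]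

/-- The grid point `n·h ∈ [0,∞]`. -/
def grid (h : ℝ) (n : ℕ) : ℝ≥0∞ := ENNReal.ofReal (n * h)

/-- `⌊t/h⌋ + 1`. -/
def gridIdx (h : ℝ) (t : ℝ≥0∞) : ℕ := ⌊t.toReal / h⌋₊ + 1

/-- `ρ_h(t) := ρ̄((⌊t/h⌋+1)h)` for finite `t`, and `ρ_h(∞) := ∞`. -/
def gridStrat (h : ℝ) (bar : ℕ → Ω → ℝ≥0∞) : ℝ≥0∞ → Ω → ℝ≥0∞ := fun t ω =>
  if t = ∞ then ∞ else bar (gridIdx h t) ω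

/-- Evaluation `φ(σ) : ω ↦ φ(σ(ω), ω)` of a time-indexed family along a random time. -/
def evalAt (φ : ℝ≥0∞ → Ω → ℝ≥0∞) (σ : Ω → ℝ≥0∞) : Ω → ℝ≥0∞ := fun ω => φ (σ ω) ω

/-- `X_t = ess inf_{σ ∈ 𝒯_t} E[U(t,σ) | 𝓕_t]` (pointwise infimum, which coincides with the
essential one since `Ω` is countable and every point is charged). -/
def X1v (μ : Measure Ω) (𝓕 : Filtration ℝ≥0∞ mΩ) (U : ℝ≥0∞ → ℝ≥0∞ → Ω → ℝ)
    (t : ℝ≥0∞) (ω : Ω) : ℝ :=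
  ⨅ σ : STge 𝓕 (fun _ => t), (μ[fun ω' => U t (σ.1 ω') ω' | 𝓕 t]) ω

/-- `Y_t = ess sup_{σ ∈ 𝒯_t} E[U(σ,t) | 𝓕_t]`. -/
def Y1v (μ : Measure Ω) (𝓕 : Filtration ℝ≥0∞ mΩ) (U : ℝ≥0∞ → ℝ≥0∞ → Ω → ℝ)
    (t : ℝ≥0∞) (ω : Ω) : ℝ :=
  ⨆ σ : STge 𝓕 (fun _ => t), (μ[fun ω' => U (σ.1 ω') t ω' | 𝓕 t]) ω

/-- Player 2: `X²_t = ess sup_{σ ∈ 𝒯_t} E[U²(t,σ) | 𝓕_t]`. -/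
def X2v (μ : Measure Ω) (𝓕 : Filtration ℝ≥0∞ mΩ) (U : ℝ≥0∞ → ℝ≥0∞ → Ω → ℝ)
    (t : ℝ≥0∞) (ω : Ω) : ℝ :=
  ⨆ σ : STge 𝓕 (fun _ => t), (μ[fun ω' => U t (σ.1 ω') ω' | 𝓕 t]) ω

/-- Player 2: `Y²_t = ess inf_{σ ∈ 𝒯_t} E[U²(σ,t) | 𝓕_t]`. -/
def Y2v (μ : Measure Ω) (𝓕 : Filtration ℝ≥0∞ mΩ) (U : ℝ≥0∞ → ℝ≥0∞ → Ω → ℝ)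
    (t : ℝ≥0∞) (ω : Ω) : ℝ :=
  ⨅ σ : STge 𝓕 (fun _ => t), (μ[fun ω' => U (σ.1 ω') t ω' | 𝓕 t]) ω

/-- `Z_t = U(t,t)`. -/
def Zv (U : ℝ≥0∞ → ℝ≥0∞ → Ω → ℝ) : ℝ≥0∞ → Ω → ℝ := fun t ω => U t t ω

/-- `X_{ρ₀} 1_{ρ₀ < τ₀} + Y_{τ₀} 1_{ρ₀ > τ₀} + Z_{ρ₀} 1_{ρ₀ = τ₀}`. -/
def dynkinKernel (X Y Z : ℝ≥0∞ → Ω → ℝ) (ρ₀ τ₀ : Ω → ℝ≥0∞) (ω : Ω) : ℝ :=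
  if ρ₀ ω < τ₀ ω then X (ρ₀ ω) ω else if τ₀ ω < ρ₀ ω then Y (τ₀ ω) ω else Z (ρ₀ ω) ω

/-- The Dynkin-game payoff `V(ρ₀,τ₀)`. -/
def dynkinV (μ : Measure Ω) (X Y Z : ℝ≥0∞ → Ω → ℝ) (ρ₀ τ₀ : Ω → ℝ≥0∞) : ℝ :=
  ∫ ω, dynkinKernel X Y Z ρ₀ τ₀ ω ∂μ

/-- The conditional Dynkin-game payoff. -/
def condDynkin (μ : Measure Ω) (m : MeasurableSpace Ω) (X Y Z : ℝ≥0∞ → Ω → ℝ)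
    (ρ₀ τ₀ : Ω → ℝ≥0∞) : Ω → ℝ :=
  μ[fun ω => dynkinKernel X Y Z ρ₀ τ₀ ω | m]

/-- `v_t¹`, the (sup-inf) value of the conditional Dynkin game `G_t¹` with payoffs
`(X¹, Y¹, Z¹)` built from `U¹`. -/
def v1v (μ : Measure Ω) (𝓕 : Filtration ℝ≥0∞ mΩ) (U : ℝ≥0∞ → ℝ≥0∞ → Ω → ℝ)
    (t : ℝ≥0∞) (ω : Ω) : ℝ :=
  ⨆ ρ₀ : STge 𝓕 (fun _ => t), ⨅ τ₀ : STge 𝓕 (fun _ => t),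
    condDynkin μ (𝓕 t) (X1v μ 𝓕 U) (Y1v μ 𝓕 U) (Zv U) ρ₀.1 τ₀.1 ω

/-- `v_t²`, the (inf-sup) value of the conditional Dynkin game `G_t²` with payoffs
`(X², Y², Z²)` built from `U²`. -/
def v2v (μ : Measure Ω) (𝓕 : Filtration ℝ≥0∞ mΩ) (U : ℝ≥0∞ → ℝ≥0∞ → Ω → ℝ)
    (t : ℝ≥0∞) (ω : Ω) : ℝ :=
  ⨅ ρ₀ : STge 𝓕 (fun _ => t), ⨆ τ₀ : STge 𝓕 (fun _ => t),
    condDynkin μ (𝓕 t) (X2v μ 𝓕 U) (Y2v μ 𝓕 U) (Zv U) ρ₀.1 τ₀.1 ω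

/-- `W_t¹ = E[U¹(t, τ_h²(t)) | 𝓕_t]`. -/
def W1v (μ : Measure Ω) (𝓕 : Filtration ℝ≥0∞ mΩ) (U : ℝ≥0∞ → ℝ≥0∞ → Ω → ℝ)
    (h : ℝ) (bar : ℕ → Ω → ℝ≥0∞) (t : ℝ≥0∞) (ω : Ω) : ℝ :=
  (μ[fun ω' => U t (gridStrat h bar t ω') ω' | 𝓕 t]) ω

/-- `W_t² = E[U²(ρ_h¹(t), t) | 𝓕_t]`. -/
def W2v (μ : Measure Ω) (𝓕 : Filtration ℝ≥0∞ mΩ) (U : ℝ≥0∞ → ℝ≥0∞ → Ω → ℝ)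
    (h : ℝ) (bar : ℕ → Ω → ℝ≥0∞) (t : ℝ≥0∞) (ω : Ω) : ℝ :=
  (μ[fun ω' => U (gridStrat h bar t ω') t ω' | 𝓕 t]) ω

/-- `μ₁ = inf {t ≥ 0 : v_t¹ ≤ W_t¹ + ε}`. -/
def mu1T (μ : Measure Ω) (𝓕 : Filtration ℝ≥0∞ mΩ) (U : ℝ≥0∞ → ℝ≥0∞ → Ω → ℝ)
    (h ε : ℝ) (bar : ℕ → Ω → ℝ≥0∞) : Ω → ℝ≥0∞ := fun ω =>
  sInf {t | v1v μ 𝓕 U t ω ≤ W1v μ 𝓕 U h bar t ω + ε}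

/-- `μ₂ = inf {t ≥ 0 : v_t² ≤ W_t² + ε}`. -/
def mu2T (μ : Measure Ω) (𝓕 : Filtration ℝ≥0∞ mΩ) (U : ℝ≥0∞ → ℝ≥0∞ → Ω → ℝ)
    (h ε : ℝ) (bar : ℕ → Ω → ℝ≥0∞) : Ω → ℝ≥0∞ := fun ω =>
  sInf {t | v2v μ 𝓕 U t ω ≤ W2v μ 𝓕 U h bar t ω + ε}

/-- `ρ̄(nh)` is a family of `ε`-optimizers for `Y¹_{nh}`:
`E[U(ρ̄(nh), nh) | 𝓕_{nh}] ≥ Y_{nh} − ε`. -/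
def IsOptRho1 (μ : Measure Ω) (𝓕 : Filtration ℝ≥0∞ mΩ) (U : ℝ≥0∞ → ℝ≥0∞ → Ω → ℝ)
    (ε h : ℝ) (bar : ℕ → Ω → ℝ≥0∞) : Prop :=
  ∀ n : ℕ, bar n ∈ STge 𝓕 (fun _ => grid h n) ∧
    ∀ᵐ ω ∂μ, Y1v μ 𝓕 U (grid h n) ω - ε ≤
      (μ[fun ω' => U (bar n ω') (grid h n) ω' | 𝓕 (grid h n)]) ω

/-- `τ̄(nh)` is a family of `ε`-optimizers for `X¹_{nh}`:
`E[U(nh, τ̄(nh)) | 𝓕_{nh}] ≤ X_{nh} + ε`. -/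
def IsOptTau1 (μ : Measure Ω) (𝓕 : Filtration ℝ≥0∞ mΩ) (U : ℝ≥0∞ → ℝ≥0∞ → Ω → ℝ)
    (ε h : ℝ) (bar : ℕ → Ω → ℝ≥0∞) : Prop :=
  ∀ n : ℕ, bar n ∈ STge 𝓕 (fun _ => grid h n) ∧
    ∀ᵐ ω ∂μ, (μ[fun ω' => U (grid h n) (bar n ω') ω' | 𝓕 (grid h n)]) ω ≤
      X1v μ 𝓕 U (grid h n) ω + ε

/-- `ρ̄²(nh)` is a family of `ε`-optimizers for `Y²_{nh}` (an essential infimum). -/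
def IsOptRho2 (μ : Measure Ω) (𝓕 : Filtration ℝ≥0∞ mΩ) (U : ℝ≥0∞ → ℝ≥0∞ → Ω → ℝ)
    (ε h : ℝ) (bar : ℕ → Ω → ℝ≥0∞) : Prop :=
  ∀ n : ℕ, bar n ∈ STge 𝓕 (fun _ => grid h n) ∧
    ∀ᵐ ω ∂μ, (μ[fun ω' => U (bar n ω') (grid h n) ω' | 𝓕 (grid h n)]) ω ≤
      Y2v μ 𝓕 U (grid h n) ω + ε

/-- `τ̄²(nh)` is a family of `ε`-optimizers for `X²_{nh}` (an essential supremum). -/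
def IsOptTau2 (μ : Measure Ω) (𝓕 : Filtration ℝ≥0∞ mΩ) (U : ℝ≥0∞ → ℝ≥0∞ → Ω → ℝ)
    (ε h : ℝ) (bar : ℕ → Ω → ℝ≥0∞) : Prop :=
  ∀ n : ℕ, bar n ∈ STge 𝓕 (fun _ => grid h n) ∧
    ∀ᵐ ω ∂μ, X2v μ 𝓕 U (grid h n) ω - ε ≤
      (μ[fun ω' => U (grid h n) (bar n ω') ω' | 𝓕 (grid h n)]) ω

/-- The standing assumptions on the filtered probability space: `ℙ` charges every point of the
(countable) `Ω`, the filtration is right continuous (usual conditions; completeness is automatic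
since null sets are empty), and `𝓕 = 𝓕_∞ = ⋃_{t<∞} 𝓕_t`. -/
def UsualSetup (μ : Measure Ω) (𝓕 : Filtration ℝ≥0∞ mΩ) : Prop :=
  (∀ ω : Ω, μ {ω} ≠ 0) ∧
  (∀ t : ℝ≥0∞, (𝓕 t : MeasurableSpace Ω) = ⨅ s ∈ Ioi t, (𝓕 s : MeasurableSpace Ω)) ∧
  ((𝓕 ∞ : MeasurableSpace Ω) = mΩ) ∧
  ((⨆ t ∈ Iio (∞ : ℝ≥0∞), (𝓕 t : MeasurableSpace Ω)) = mΩ)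

/-- The standing assumptions on a payoff `U`: boundedness, `𝓕_{s∨t}`-measurability of `U(s,t)`,
and the uniform-continuity modulus `r` (bounded, nondecreasing, `r(0+) = r(0) = 0`).  Note that
the modulus condition, being imposed on all of `[0,∞]`, encodes that the values at `∞` are the
corresponding limits. -/
def PayoffAssumption (𝓕 : Filtration ℝ≥0∞ mΩ) (U : ℝ≥0∞ → ℝ≥0∞ → Ω → ℝ)
    (r : ℝ≥0∞ → ℝ) : Prop :=
  (∃ M : ℝ, ∀ s t ω, |U s t ω| ≤ M) ∧
  (∀ s t : ℝ≥0∞, Measurable[𝓕 (s ⊔ t)] (U s t)) ∧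
  Monotone r ∧ (∀ x, 0 ≤ r x) ∧ (∃ C : ℝ, ∀ x, r x ≤ C) ∧ r 0 = 0 ∧
  Tendsto r (𝓝[>] (0 : ℝ≥0∞)) (𝓝 (0 : ℝ)) ∧
  (∀ s t s' t' : ℝ≥0∞, ∀ ω, |U s t ω - U s' t' ω| ≤ r (dd s s' + dd t t'))

/-- The values of `U` at `∞` are the limits of the values at finite times. -/
def LimitsAtInfty (U : ℝ≥0∞ → ℝ≥0∞ → Ω → ℝ) : Prop :=
  (∀ s ω, Tendsto (fun b => U s b ω) (𝓝[<] (∞ : ℝ≥0∞)) (𝓝 (U s ∞ ω))) ∧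
  (∀ t ω, Tendsto (fun a => U a t ω) (𝓝[<] (∞ : ℝ≥0∞)) (𝓝 (U ∞ t ω))) ∧
  (∀ ω, Tendsto (fun p : ℝ≥0∞ × ℝ≥0∞ => U p.1 p.2 ω)
    ((𝓝[<] (∞ : ℝ≥0∞)) ×ˢ (𝓝[<] (∞ : ℝ≥0∞))) (𝓝 (U ∞ ∞ ω)))

/-- `ess inf_{σ ∈ 𝒯_v} E[U(s,σ) | 𝓕_v]` for a stopping time `v`. -/
def XatST (μ : Measure Ω) (𝓕 : Filtration ℝ≥0∞ mΩ) (U : ℝ≥0∞ → ℝ≥0∞ → Ω → ℝ)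
    {v : Ω → ℝ≥0∞} (hv : IsStoppingTime 𝓕 (fun ω => (v ω : WithTop ℝ≥0∞))) (s : ℝ≥0∞) (ω : Ω) : ℝ :=
  ⨅ σ : STge 𝓕 v, (μ[fun ω' => U s (σ.1 ω') ω' | hv.measurableSpace]) ω

/-- `X̃_v(s) = ess inf_{σ ∈ 𝒯_v} E[U(s,σ) | 𝓕_v]` for a deterministic time `v`. -/
def Xat (μ : Measure Ω) (𝓕 : Filtration ℝ≥0∞ mΩ) (U : ℝ≥0∞ → ℝ≥0∞ → Ω → ℝ)
    (v s : ℝ≥0∞) (ω : Ω) : ℝ :=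
  ⨅ σ : STge 𝓕 (fun _ => v), (μ[fun ω' => U s (σ.1 ω') ω' | 𝓕 v]) ω

/-- `ρ₀* = μ₁ 1_{μ₁ ≤ μ₂} + ρ²_{μ₂+δ} 1_{μ₁ > μ₂}`. -/
def rhoStar0 (m1 m2 rsad2 : Ω → ℝ≥0∞) : Ω → ℝ≥0∞ := fun ω =>
  if m1 ω ≤ m2 ω then m1 ω else rsad2 ω

/-- `ρ₁*(t) = ρ_h²(t)` if `t ≥ μ₁ ∧ μ₂ + δ` and `μ₁ > μ₂`, else `ρ_h¹(t)`. -/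
def rhoStar1 (m1 m2 : Ω → ℝ≥0∞) (δ : ℝ) (φ1 φ2 : ℝ≥0∞ → Ω → ℝ≥0∞) :
    ℝ≥0∞ → Ω → ℝ≥0∞ := fun t ω =>
  if (m1 ω ⊓ m2 ω) + ENNReal.ofReal δ ≤ t ∧ m2 ω < m1 ω then φ2 t ω else φ1 t ω

/-- `τ₀* = τ¹_{μ₁+δ} 1_{μ₁ ≤ μ₂} + μ₂ 1_{μ₁ > μ₂}`. -/
def tauStar0 (m1 m2 tsad1 : Ω → ℝ≥0∞) : Ω → ℝ≥0∞ := fun ω =>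
  if m1 ω ≤ m2 ω then tsad1 ω else m2 ω

/-- `τ₁*(t) = τ_h¹(t)` if `t ≥ μ₁ ∧ μ₂ + δ` and `μ₁ ≤ μ₂`, else `τ_h²(t)`. -/
def tauStar1 (m1 m2 : Ω → ℝ≥0∞) (δ : ℝ) (ψ1 ψ2 : ℝ≥0∞ → Ω → ℝ≥0∞) :
    ℝ≥0∞ → Ω → ℝ≥0∞ := fun t ω =>
  if (m1 ω ⊓ m2 ω) + ENNReal.ofReal δ ≤ t ∧ m1 ω ≤ m2 ω then ψ1 t ω else ψ2 t ω

section Aux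

set_option linter.unusedSectionVars false

variable {Ω : Type*} [mΩ : MeasurableSpace Ω]

/-- Two points are related if they agree on every `m`-measurable set. -/
def rel (m : MeasurableSpace Ω) (a b : Ω) : Prop :=
  ∀ A : Set Ω, MeasurableSet[m] A → (a ∈ A ↔ b ∈ A)

lemma rel_refl (m : MeasurableSpace Ω) (a : Ω) : rel m a a := fun _ _ => Iff.rfl

lemma rel_symm {m : MeasurableSpace Ω} {a b : Ω} (h : rel m a b) : rel m b a :=
  fun A hA => (h A hA).symm

lemma rel_mono {m m' : MeasurableSpace Ω} (h : m ≤ m') {a b : Ω} (hr : rel m' a b) :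
    rel m a b := fun A hA => hr A (h _ hA)

lemma exists_sep {m : MeasurableSpace Ω} {a b : Ω} (h : ¬ rel m a b) :
    ∃ A : Set Ω, MeasurableSet[m] A ∧ a ∈ A ∧ b ∉ A := by
  simp only [rel, not_forall] at h
  obtain ⟨A, hA, hab⟩ := h
  by_cases ha : a ∈ A
  · exact ⟨A, hA, ha, fun hb => hab ⟨fun _ => hb, fun _ => ha⟩⟩
  · have hb : b ∈ A := by
      by_contra hb
      exact hab ⟨fun h' => absurd h' ha, fun h' => absurd h' hb⟩
    exact ⟨Aᶜ, hA.compl, ha, by simpa using hb⟩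

lemma measurableSet_atom [Countable Ω] (m : MeasurableSpace Ω) (a : Ω) :
    MeasurableSet[m] {b | rel m a b} := by
  classical
  have h : {b | rel m a b} =
      ⋂ c : Ω, if h : rel m a c then (Set.univ : Set Ω) else (exists_sep h).choose := by
    ext x
    simp only [Set.mem_iInter, Set.mem_setOf_eq]
    constructor
    · intro hx c
      by_cases h : rel m a c
      · simp [h]
      · rw [dif_neg h]
        exact (hx _ (exists_sep h).choose_spec.1).mp (exists_sep h).choose_spec.2.1
    · intro hx
      by_contra hrel
      have hxx := hx x
      rw [dif_neg hrel] at hxx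
      exact (exists_sep hrel).choose_spec.2.2 hxx
  rw [h]
  refine MeasurableSet.iInter fun c => ?_
  by_cases h : rel m a c
  · rw [dif_pos h]; exact MeasurableSet.univ
  · rw [dif_neg h]; exact (exists_sep h).choose_spec.1

lemma measurableSet_of_rel [Countable Ω] {m : MeasurableSpace Ω} {S : Set Ω}
    (h : ∀ a ∈ S, ∀ b, rel m a b → b ∈ S) : MeasurableSet[m] S := by
  have hS : S = ⋃ a ∈ S, {b | rel m a b} := by
    ext x
    simp only [Set.mem_iUnion]
    exact ⟨fun hx => ⟨x, hx, rel_refl m x⟩, fun ⟨a, ha, hr⟩ => h a ha x hr⟩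
  rw [hS]
  exact MeasurableSet.biUnion S.to_countable (fun a _ => measurableSet_atom m a)

lemma measurable_of_rel [Countable Ω] {m : MeasurableSpace Ω} {α : Type*} [MeasurableSpace α]
    {f : Ω → α} (h : ∀ a b, rel m a b → f a = f b) : Measurable[m] f := by
  intro B _
  refine measurableSet_of_rel fun a ha b hr => ?_
  simp only [Set.mem_preimage] at ha ⊢
  rw [← h a b hr]; exact ha

lemma rel_eq {m : MeasurableSpace Ω} {α : Type*} [MeasurableSpace α]
    [MeasurableSingletonClass α]
    {f : Ω → α} (hf : Measurable[m] f) {a b : Ω} (h : rel m a b) : f a = f b := by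
  have h1 := h (f ⁻¹' {f a}) (hf (measurableSet_singleton (f a)))
  have hb : f b ∈ ({f a} : Set α) := h1.mp rfl
  exact (Set.mem_singleton_iff.mp hb).symm

lemma ae_everywhere {μ : Measure Ω} (hμ : ∀ ω : Ω, μ {ω} ≠ 0) {P : Ω → Prop}
    (h : ∀ᵐ ω ∂μ, P ω) : ∀ ω, P ω := by
  intro ω
  by_contra hc
  refine hμ ω (le_antisymm ?_ (by simp))
  calc μ {ω} ≤ μ {x | ¬ P x} := measure_mono (Set.singleton_subset_iff.mpr hc)
  _ = 0 := by rwa [ae_iff] at h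

lemma integrable_of_bound {μ : Measure Ω} [IsFiniteMeasure μ] {f : Ω → ℝ}
    (hf : Measurable f) {M : ℝ} (h : ∀ ω, |f ω| ≤ M) : Integrable f μ :=
  Integrable.mono' (integrable_const M) hf.aestronglyMeasurable
    (Filter.Eventually.of_forall fun ω => by simpa [Real.norm_eq_abs] using h ω)

lemma st_le {𝓕 : Filtration ℝ≥0∞ mΩ} {τ : Ω → ℝ≥0∞}
    (hτ : IsStoppingTime 𝓕 (fun ω => (τ ω : WithTop ℝ≥0∞))) (i : ℝ≥0∞) :
    MeasurableSet[𝓕 i] {ω | τ ω ≤ i} := by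
  simpa using hτ i

lemma st_of_le {𝓕 : Filtration ℝ≥0∞ mΩ} {τ : Ω → ℝ≥0∞}
    (h : ∀ i : ℝ≥0∞, MeasurableSet[𝓕 i] {ω | τ ω ≤ i}) :
    IsStoppingTime 𝓕 (fun ω => (τ ω : WithTop ℝ≥0∞)) := fun i => by
  simpa using h i

lemma rel_stoppingTime {𝓕 : Filtration ℝ≥0∞ mΩ} {τ : Ω → ℝ≥0∞} (hτ : IsStoppingTime 𝓕 (fun ω => (τ ω : WithTop ℝ≥0∞)))
    {a b : Ω} (h : rel mΩ a b) : τ a = τ b := by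
  have key : ∀ x y : Ω, rel mΩ x y → τ y ≤ τ x := by
    intro x y hxy
    exact (hxy {z | τ z ≤ τ x} (𝓕.le _ _ (st_le hτ (τ x)))).mp (by simp : _ ∈ _)
  exact le_antisymm (key b a (rel_symm h)) (key a b h)

lemma measurableSet_lt_stopping [Countable Ω] {𝓕 : Filtration ℝ≥0∞ mΩ} {τ : Ω → ℝ≥0∞}
    (hτ : IsStoppingTime 𝓕 (fun ω => (τ ω : WithTop ℝ≥0∞))) (u : ℝ≥0∞) : MeasurableSet[𝓕 u] {ω | τ ω < u} := by
  refine measurableSet_of_rel fun a ha b hr => ?_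
  simp only [Set.mem_setOf_eq] at ha ⊢
  have hb : τ b ≤ τ a := (hr {z | τ z ≤ τ a} (𝓕.mono ha.le _ (st_le hτ (τ a)))).mp (by simp : _ ∈ _)
  exact lt_of_le_of_lt hb ha

lemma sInf_measurable_lt [Countable Ω] {𝓕 : Filtration ℝ≥0∞ mΩ} {D : ℝ≥0∞ → Ω → Prop}
    (hD : ∀ s, MeasurableSet[𝓕 s] {ω | D s ω}) (u : ℝ≥0∞) :
    MeasurableSet[𝓕 u] {ω | sInf {s | D s ω} < u} := by
  refine measurableSet_of_rel fun a ha b hr => ?_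
  simp only [Set.mem_setOf_eq] at ha ⊢
  obtain ⟨s, hs, hsu⟩ := sInf_lt_iff.mp ha
  have hbD : D s b := (hr {ω | D s ω} (𝓕.mono hsu.le _ (hD s))).mp hs
  exact lt_of_le_of_lt (sInf_le (show s ∈ {s' | D s' b} from hbD)) hsu

lemma sInf_measurable_le [Countable Ω] {𝓕 : Filtration ℝ≥0∞ mΩ}
    (hrc : ∀ t : ℝ≥0∞, (𝓕 t : MeasurableSpace Ω) = ⨅ s ∈ Set.Ioi t, (𝓕 s : MeasurableSpace Ω))
    {D : ℝ≥0∞ → Ω → Prop} (hD : ∀ s, MeasurableSet[𝓕 s] {ω | D s ω}) (t : ℝ≥0∞) :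
    MeasurableSet[𝓕 t] {ω | sInf {s | D s ω} ≤ t} := by
  have key : ∀ u : ℝ≥0∞, t < u → MeasurableSet[𝓕 u] {ω | sInf {s | D s ω} ≤ t} := by
    intro u htu
    refine measurableSet_of_rel fun a ha b hr => ?_
    simp only [Set.mem_setOf_eq] at ha ⊢
    by_contra hb
    push_neg at hb
    have h2 : sInf {s | D s a} < min u (sInf {s | D s b}) := lt_of_le_of_lt ha (lt_min htu hb)
    obtain ⟨s, hs, hsu⟩ := sInf_lt_iff.mp h2
    have hsu' : s < u := lt_of_lt_of_le hsu (min_le_left _ _)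
    have hbD : D s b := (hr {ω | D s ω} (𝓕.mono hsu'.le _ (hD s))).mp hs
    exact absurd (lt_of_le_of_lt (sInf_le (show s ∈ {s' | D s' b} from hbD)) (lt_of_lt_of_le hsu (min_le_right _ _)))
      (lt_irrefl _)
  rcases eq_or_ne t ∞ with ht | ht
  · have : {ω : Ω | sInf {s | D s ω} ≤ t} = Set.univ := by
      ext ω; simp [ht]
    rw [this]; exact MeasurableSet.univ
  · have h1 : (𝓕 t : MeasurableSpace Ω) = ⨅ s : Set.Ioi t, (𝓕 (s : ℝ≥0∞) : MeasurableSpace Ω) := by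
      rw [hrc t, iInf_subtype]
    have h2 : MeasurableSet[⨅ s : Set.Ioi t, (𝓕 (s : ℝ≥0∞) : MeasurableSpace Ω)]
        {ω | sInf {s | D s ω} ≤ t} := by
      rw [MeasurableSpace.measurableSet_iInf]
      rintro ⟨u, hu⟩
      exact key u hu
    exact h1 ▸ h2

end Aux

/-- Case 5 in the proof of Proposition 4.2: choose `δ > 0` with `r(δ) < ε`
and `E|Y¹_{μ₂+δ} − Y¹_{μ₂}| < ε`.  Then for any stopping strategy `ρ`, on
`A₅ = {ρ₀ ≥ μ₁∧μ₂+δ} ∩ {μ₁ > μ₂}`: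
`E[U¹(ρ[τ*], τ*[ρ]) 1_{A₅}] = E[U¹(ρ₁(μ₂), μ₂) 1_{A₅}] ≤ E[Y¹_{μ₂} 1_{A₅}] + 3ε
= E[(W¹_{μ₁} 1_{μ₁≤μ₂} + Y¹_{μ₂} 1_{μ₁>μ₂}) 1_{A₅}] + 3ε`. -/
theorem case_five_estimate [Countable Ω] (μ : Measure Ω) [IsProbabilityMeasure μ]
    (𝓕 : Filtration ℝ≥0∞ mΩ) (hsetup : UsualSetup μ 𝓕)
    (U1 U2 : ℝ≥0∞ → ℝ≥0∞ → Ω → ℝ) (r : ℝ≥0∞ → ℝ)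
    (hU1 : PayoffAssumption 𝓕 U1 r) (hU2 : PayoffAssumption 𝓕 U2 r)
    (ε h δ : ℝ) (hε : 0 < ε) (hh : 0 < h) (hδ : 0 < δ)
    (ρbar1 τbar1 ρbar2 τbar2 : ℕ → Ω → ℝ≥0∞)
    (hρ1 : IsOptRho1 μ 𝓕 U1 ε h ρbar1) (hτ1 : IsOptTau1 μ 𝓕 U1 ε h τbar1)
    (hρ2 : IsOptRho2 μ 𝓕 U2 ε h ρbar2) (hτ2 : IsOptTau2 μ 𝓕 U2 ε h τbar2)
    (m1 m2 : Ω → ℝ≥0∞)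
    (hm1 : m1 = mu1T μ 𝓕 U1 h ε τbar2) (hm2 : m2 = mu2T μ 𝓕 U2 h ε ρbar1)
    (τsad1 : Ω → ℝ≥0∞)
    (hτsad1 : τsad1 ∈ STge 𝓕 (fun ω => m1 ω + ENNReal.ofReal δ))
    (hrδ : r (ENNReal.ofReal δ) < ε)
    (hYδ : (∫ ω, |Y1v μ 𝓕 U1 (m2 ω + ENNReal.ofReal δ) ω - Y1v μ 𝓕 U1 (m2 ω) ω| ∂μ) < ε) :
    ∀ ρ : (Ω → ℝ≥0∞) × (ℝ≥0∞ → Ω → ℝ≥0∞), IsStrategy 𝓕 ρ →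
      (∫ ω, Set.indicator {ω' | (m1 ω' ⊓ m2 ω') + ENNReal.ofReal δ ≤ ρ.1 ω' ∧ m2 ω' < m1 ω'}
          (fun ω' => U1
            (play ρ (tauStar0 m1 m2 τsad1,
              tauStar1 m1 m2 δ (gridStrat h τbar1) (gridStrat h τbar2)) ω')
            (play (tauStar0 m1 m2 τsad1,
              tauStar1 m1 m2 δ (gridStrat h τbar1) (gridStrat h τbar2)) ρ ω') ω') ω ∂μ)
        = (∫ ω, Set.indicator
            {ω' | (m1 ω' ⊓ m2 ω') + ENNReal.ofReal δ ≤ ρ.1 ω' ∧ m2 ω' < m1 ω'}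
            (fun ω' => U1 (ρ.2 (m2 ω') ω') (m2 ω') ω') ω ∂μ) ∧
      (∫ ω, Set.indicator {ω' | (m1 ω' ⊓ m2 ω') + ENNReal.ofReal δ ≤ ρ.1 ω' ∧ m2 ω' < m1 ω'}
          (fun ω' => U1 (ρ.2 (m2 ω') ω') (m2 ω') ω') ω ∂μ)
        ≤ (∫ ω, Set.indicator
            {ω' | (m1 ω' ⊓ m2 ω') + ENNReal.ofReal δ ≤ ρ.1 ω' ∧ m2 ω' < m1 ω'}
            (fun ω' => Y1v μ 𝓕 U1 (m2 ω') ω') ω ∂μ) + 3*ε ∧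
      (∫ ω, Set.indicator {ω' | (m1 ω' ⊓ m2 ω') + ENNReal.ofReal δ ≤ ρ.1 ω' ∧ m2 ω' < m1 ω'}
          (fun ω' => Y1v μ 𝓕 U1 (m2 ω') ω') ω ∂μ)
        = (∫ ω, Set.indicator
            {ω' | (m1 ω' ⊓ m2 ω') + ENNReal.ofReal δ ≤ ρ.1 ω' ∧ m2 ω' < m1 ω'}
            (fun ω' => if m1 ω' ≤ m2 ω' then W1v μ 𝓕 U1 h τbar2 (m1 ω') ω'
                       else Y1v μ 𝓕 U1 (m2 ω') ω') ω ∂μ) := by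

  classical
  obtain ⟨hcharge, hrc, hFinf, -⟩ := hsetup
  obtain ⟨⟨M, hM⟩, hU1meas, hrmono, hrnn, -, hr00, -, hmod⟩ := hU1
  intro ρ hρst
  have hneΩ : Nonempty Ω := by
    by_contra hΩ
    rw [not_nonempty_iff] at hΩ
    have h1 : μ Set.univ = 1 := measure_univ
    rw [Set.univ_eq_empty_iff.mpr hΩ, measure_empty] at h1
    exact zero_ne_one h1
  have hM0 : 0 ≤ M := le_trans (abs_nonneg _) (hM 0 0 hneΩ.some)
  set δ' : ℝ≥0∞ := ENNReal.ofReal δ with hδ'def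
  have hδ'0 : δ' ≠ 0 := (ENNReal.ofReal_pos.mpr hδ).ne'
  have hδ'top : δ' ≠ ∞ := ENNReal.ofReal_ne_top
  set S : Set Ω := {ω' | (m1 ω' ⊓ m2 ω') + δ' ≤ ρ.1 ω' ∧ m2 ω' < m1 ω'} with hSdef
  have hSfacts : ∀ ω ∈ S, m2 ω ≠ ∞ ∧ m2 ω + δ' ≤ ρ.1 ω ∧ m2 ω < m1 ω := by
    intro ω hω
    obtain ⟨h1, h2⟩ := hω
    have hinf : m1 ω ⊓ m2 ω = m2 ω := inf_eq_right.mpr h2.le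
    exact ⟨h2.ne_top, by rwa [hinf] at h1, h2⟩
  -- measurability of the level sets of `m1`, `m2`
  have hD2 : ∀ s : ℝ≥0∞, MeasurableSet[𝓕 s]
      {ω | v2v μ 𝓕 U2 s ω ≤ W2v μ 𝓕 U2 h ρbar1 s ω + ε} := by
    intro s
    refine measurableSet_of_rel fun a ha b hrab => ?_
    have hv : v2v μ 𝓕 U2 s a = v2v μ 𝓕 U2 s b :=
      iInf_congr fun ρ₀ => iSup_congr fun τ₀ =>
        rel_eq (stronglyMeasurable_condExp.measurable) hrab
    have hw : W2v μ 𝓕 U2 h ρbar1 s a = W2v μ 𝓕 U2 h ρbar1 s b :=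
      rel_eq (stronglyMeasurable_condExp.measurable) hrab
    simp only [Set.mem_setOf_eq] at ha ⊢
    rw [← hv, ← hw]; exact ha
  have hD1 : ∀ s : ℝ≥0∞, MeasurableSet[𝓕 s]
      {ω | v1v μ 𝓕 U1 s ω ≤ W1v μ 𝓕 U1 h τbar2 s ω + ε} := by
    intro s
    refine measurableSet_of_rel fun a ha b hrab => ?_
    have hv : v1v μ 𝓕 U1 s a = v1v μ 𝓕 U1 s b :=
      iSup_congr fun ρ₀ => iInf_congr fun τ₀ =>
        rel_eq (stronglyMeasurable_condExp.measurable) hrab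
    have hw : W1v μ 𝓕 U1 h τbar2 s a = W1v μ 𝓕 U1 h τbar2 s b :=
      rel_eq (stronglyMeasurable_condExp.measurable) hrab
    simp only [Set.mem_setOf_eq] at ha ⊢
    rw [← hv, ← hw]; exact ha
  have hm2le : ∀ t, MeasurableSet[𝓕 t] {ω | m2 ω ≤ t} := by
    intro t; rw [hm2]; exact sInf_measurable_le hrc hD2 t
  have hm2lt : ∀ u, MeasurableSet[𝓕 u] {ω | m2 ω < u} := by
    intro u; rw [hm2]; exact sInf_measurable_lt hD2 u
  have hm1le : ∀ t, MeasurableSet[𝓕 t] {ω | m1 ω ≤ t} := by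
    intro t; rw [hm1]; exact sInf_measurable_le hrc hD1 t
  have hm2st : IsStoppingTime 𝓕 (fun ω => (m2 ω : WithTop ℝ≥0∞)) := st_of_le fun t => hm2le t
  have hm1st : IsStoppingTime 𝓕 (fun ω => (m1 ω : WithTop ℝ≥0∞)) := st_of_le fun t => hm1le t
  have hrel_m2 : ∀ a b, rel mΩ a b → m2 a = m2 b := fun a b hr => rel_stoppingTime hm2st hr
  have hrel_m1 : ∀ a b, rel mΩ a b → m1 a = m1 b := fun a b hr => rel_stoppingTime hm1st hr
  have hrel_ρ1 : ∀ a b, rel mΩ a b → ρ.1 a = ρ.1 b := fun a b hr => rel_stoppingTime hρst.1 hr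
  have hρ2meas : ∀ t : ℝ≥0∞, Measurable (ρ.2 t) :=
    fun t => hρst.2.1.comp (measurable_const.prodMk measurable_id)
  have hrel_ρ2 : ∀ (t : ℝ≥0∞) (a b : Ω), rel mΩ a b → ρ.2 t a = ρ.2 t b :=
    fun t a b hr => rel_eq (hρ2meas t) hr
  have hrel_U1 : ∀ (u v : ℝ≥0∞) (a b : Ω), rel mΩ a b → U1 u v a = U1 u v b :=
    fun u v a b hr => rel_eq (hU1meas u v) (rel_mono (𝓕.le _) hr)
  have hSrel : ∀ a ∈ S, ∀ b, rel mΩ a b → b ∈ S := by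
    intro a ha b hr
    have h1 := hrel_m1 a b hr; have h2 := hrel_m2 a b hr; have h3 := hrel_ρ1 a b hr
    simp only [hSdef, Set.mem_setOf_eq] at ha ⊢
    rw [← h1, ← h2, ← h3]; exact ha
  have hSmeas : MeasurableSet S := measurableSet_of_rel hSrel
  -- conditional expectation bound
  have hbd_condexp : ∀ {f : Ω → ℝ}, (∀ ω, |f ω| ≤ M) →
      ∀ (m : MeasurableSpace Ω), ∀ ω, |(μ[f|m]) ω| ≤ M := by
    intro f hfbd m
    refine ae_everywhere (mΩ := mΩ) hcharge ?_
    have h1 : ∀ᵐ ω ∂μ, |f ω| ≤ (M.toNNReal : ℝ) := Filter.Eventually.of_forall fun ω => by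
      rw [Real.coe_toNNReal M hM0]; exact hfbd ω
    filter_upwards [ae_bdd_condExp_of_ae_bdd (m := m) h1] with ω hω
    rwa [Real.coe_toNNReal M hM0] at hω
  have hUcomp_meas : ∀ (σ : Ω → ℝ≥0∞), (∀ a b, rel mΩ a b → σ a = σ b) → ∀ (c : ℝ≥0∞),
      Measurable fun ω => U1 (σ ω) c ω := by
    intro σ hσ c
    refine measurable_of_rel fun a b hr => ?_
    rw [hσ a b hr]
    exact hrel_U1 (σ b) c a b hr
  -- facts about `Y1v`
  have hSTne : ∀ c : ℝ≥0∞, Nonempty ↥(STge 𝓕 (fun _ => c)) := fun c =>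
    ⟨⟨fun _ => ∞, isStoppingTime_const 𝓕 ∞, fun _ => le_top⟩⟩
  have hcond_bdd : ∀ (c : ℝ≥0∞) (σ : ↥(STge 𝓕 (fun _ => c))) (ω : Ω),
      |(μ[fun ω' => U1 (σ.1 ω') c ω'|𝓕 c]) ω| ≤ M := by
    intro c σ ω
    have hmeas : Measurable fun ω' => U1 (σ.1 ω') c ω' :=
      hUcomp_meas σ.1 (fun a b hr => rel_stoppingTime σ.2.1 hr) c
    exact hbd_condexp (fun ω' => hM _ _ _) (𝓕 c) ω
  have hY_le : ∀ (c : ℝ≥0∞) (σ : ↥(STge 𝓕 (fun _ => c))) (ω : Ω),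
      (μ[fun ω' => U1 (σ.1 ω') c ω'|𝓕 c]) ω ≤ Y1v μ 𝓕 U1 c ω := by
    intro c σ ω
    haveI := hSTne c
    exact le_ciSup (f := fun σ' : ↥(STge 𝓕 (fun _ => c)) =>
        (μ[fun ω' => U1 (σ'.1 ω') c ω'|𝓕 c]) ω)
      ⟨M, by rintro x ⟨σ', rfl⟩; exact (abs_le.mp (hcond_bdd c σ' ω)).2⟩ σ
  have hY_bdd : ∀ (c : ℝ≥0∞) (ω : Ω), |Y1v μ 𝓕 U1 c ω| ≤ M := by
    intro c ω
    haveI := hSTne c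
    refine abs_le.mpr ⟨?_, ?_⟩
    · refine le_trans ?_ (hY_le c (hSTne c).some ω)
      exact (abs_le.mp (hcond_bdd c (hSTne c).some ω)).1
    · exact ciSup_le fun σ => (abs_le.mp (hcond_bdd c σ ω)).2
  have hY_rel : ∀ (c : ℝ≥0∞) (a b : Ω), rel mΩ a b → Y1v μ 𝓕 U1 c a = Y1v μ 𝓕 U1 c b := by
    intro c a b hr
    exact iSup_congr fun σ =>
      rel_eq stronglyMeasurable_condExp.measurable (rel_mono (𝓕.le c) hr)
  -- Part 1
  have hpart1 : (∫ ω, S.indicator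
      (fun ω' => U1
        (play ρ (tauStar0 m1 m2 τsad1,
          tauStar1 m1 m2 δ (gridStrat h τbar1) (gridStrat h τbar2)) ω')
        (play (tauStar0 m1 m2 τsad1,
          tauStar1 m1 m2 δ (gridStrat h τbar1) (gridStrat h τbar2)) ρ ω') ω') ω ∂μ)
      = ∫ ω, S.indicator (fun ω' => U1 (ρ.2 (m2 ω') ω') (m2 ω') ω') ω ∂μ := by
    refine integral_congr_ae (Filter.Eventually.of_forall fun ω => ?_)
    by_cases hω : ω ∈ S
    · rw [Set.indicator_of_mem hω, Set.indicator_of_mem hω]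
      obtain ⟨hm2top, hρ0, hm⟩ := hSfacts ω hω
      have hτ0 : tauStar0 m1 m2 τsad1 ω = m2 ω := by
        simp only [tauStar0]; exact if_neg (not_le.mpr hm)
      have hlt : m2 ω < ρ.1 ω := lt_of_lt_of_le (ENNReal.lt_add_right hm2top hδ'0) hρ0
      have hp1 : play ρ (tauStar0 m1 m2 τsad1,
          tauStar1 m1 m2 δ (gridStrat h τbar1) (gridStrat h τbar2)) ω = ρ.2 (m2 ω) ω := by
        simp only [play, hτ0]
        exact if_neg (not_le.mpr hlt)
      have hp2 : play (tauStar0 m1 m2 τsad1,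
          tauStar1 m1 m2 δ (gridStrat h τbar1) (gridStrat h τbar2)) ρ ω = m2 ω := by
        simp only [play, hτ0]
        rw [if_pos hlt.le]
      rw [hp1, hp2]
    · rw [Set.indicator_of_notMem hω, Set.indicator_of_notMem hω]
  -- Part 3
  have hpart3 : (∫ ω, S.indicator (fun ω' => Y1v μ 𝓕 U1 (m2 ω') ω') ω ∂μ)
      = ∫ ω, S.indicator (fun ω' => if m1 ω' ≤ m2 ω' then W1v μ 𝓕 U1 h τbar2 (m1 ω') ω'
          else Y1v μ 𝓕 U1 (m2 ω') ω') ω ∂μ := by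
    refine integral_congr_ae (Filter.Eventually.of_forall fun ω => ?_)
    by_cases hω : ω ∈ S
    · rw [Set.indicator_of_mem hω, Set.indicator_of_mem hω,
        if_neg (not_le.mpr (hSfacts ω hω).2.2)]
    · rw [Set.indicator_of_notMem hω, Set.indicator_of_notMem hω]
  -- Part 2
  have hg_rel : ∀ a b, rel mΩ a b → ρ.2 (m2 a) a = ρ.2 (m2 b) b := by
    intro a b hr; rw [hrel_m2 a b hr]; exact hrel_ρ2 _ a b hr
  have hg_gt : ∀ ω ∈ S, m2 ω < ρ.2 (m2 ω) ω :=
    fun ω hω => (hρst.2.2 (m2 ω) (hSfacts ω hω).1).2 ω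
  have hsf_rel : ∀ a b, rel mΩ a b →
      max (ρ.2 (m2 a) a) (m2 a + δ') = max (ρ.2 (m2 b) b) (m2 b + δ') := by
    intro a b hr; rw [hg_rel a b hr, hrel_m2 a b hr]
  -- measurability and integrability of the four integrands
  have hF0meas : Measurable (fun ω => U1 (ρ.2 (m2 ω) ω) (m2 ω) ω) := by
    refine measurable_of_rel fun a b hr => ?_
    rw [hg_rel a b hr, hrel_m2 a b hr]
    exact hrel_U1 _ _ a b hr
  have hF1meas : Measurable
      (fun ω => U1 (max (ρ.2 (m2 ω) ω) (m2 ω + δ')) (m2 ω + δ') ω) := by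
    refine measurable_of_rel fun a b hr => ?_
    rw [hsf_rel a b hr, hrel_m2 a b hr]
    exact hrel_U1 _ _ a b hr
  have hF2meas : Measurable (fun ω => Y1v μ 𝓕 U1 (m2 ω + δ') ω) := by
    refine measurable_of_rel fun a b hr => ?_
    rw [hrel_m2 a b hr]
    exact hY_rel _ a b hr
  have hF3meas : Measurable (fun ω => Y1v μ 𝓕 U1 (m2 ω) ω) := by
    refine measurable_of_rel fun a b hr => ?_
    rw [hrel_m2 a b hr]
    exact hY_rel _ a b hr
  have habs_ind : ∀ (f : Ω → ℝ) {K : ℝ}, 0 ≤ K → (∀ ω, |f ω| ≤ K) → ∀ ω, |S.indicator f ω| ≤ K := by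
    intro f K hK bd ω
    by_cases hω : ω ∈ S
    · rw [Set.indicator_of_mem hω]; exact bd ω
    · rw [Set.indicator_of_notMem hω]; simpa using hK
  have hF0int : Integrable (S.indicator fun ω => U1 (ρ.2 (m2 ω) ω) (m2 ω) ω) μ := by
    exact integrable_of_bound (hF0meas.indicator hSmeas)
      (habs_ind _ hM0 fun ω => hM _ _ _)
  have hF1int : Integrable (S.indicator
      fun ω => U1 (max (ρ.2 (m2 ω) ω) (m2 ω + δ')) (m2 ω + δ') ω) μ := by
    exact integrable_of_bound (hF1meas.indicator hSmeas)
      (habs_ind _ hM0 fun ω => hM _ _ _)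
  have hF2int : Integrable (S.indicator fun ω => Y1v μ 𝓕 U1 (m2 ω + δ') ω) μ := by
    exact integrable_of_bound (hF2meas.indicator hSmeas)
      (habs_ind _ hM0 fun ω => hY_bdd _ _)
  have hF3int : Integrable (S.indicator fun ω => Y1v μ 𝓕 U1 (m2 ω) ω) μ := by
    exact integrable_of_bound (hF3meas.indicator hSmeas)
      (habs_ind _ hM0 fun ω => hY_bdd _ _)
  have hFdint : Integrable
      (fun ω => |Y1v μ 𝓕 U1 (m2 ω + δ') ω - Y1v μ 𝓕 U1 (m2 ω) ω|) μ := by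
    refine integrable_of_bound ((hF2meas.sub hF3meas).abs) (M := M + M) fun ω => ?_
    rw [abs_abs]
    calc |Y1v μ 𝓕 U1 (m2 ω + δ') ω - Y1v μ 𝓕 U1 (m2 ω) ω|
        ≤ |Y1v μ 𝓕 U1 (m2 ω + δ') ω| + |Y1v μ 𝓕 U1 (m2 ω) ω| := abs_sub _ _
      _ ≤ M + M := add_le_add (hY_bdd _ _) (hY_bdd _ _)
  -- Step A : `∫ 1_S U1(g, m2) ≤ ∫ 1_S U1(s, m2+δ') + 2ε`
  have hstepA : (∫ ω, S.indicator (fun ω' => U1 (ρ.2 (m2 ω') ω') (m2 ω') ω') ω ∂μ)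
      ≤ (∫ ω, S.indicator
          (fun ω' => U1 (max (ρ.2 (m2 ω') ω') (m2 ω' + δ')) (m2 ω' + δ') ω') ω ∂μ)
        + 2*ε := by
    have hpt : ∀ ω, S.indicator (fun ω' => U1 (ρ.2 (m2 ω') ω') (m2 ω') ω') ω
        ≤ S.indicator
            (fun ω' => U1 (max (ρ.2 (m2 ω') ω') (m2 ω' + δ')) (m2 ω' + δ') ω') ω + 2*ε := by
      intro ω
      by_cases hω : ω ∈ S
      · rw [Set.indicator_of_mem hω, Set.indicator_of_mem hω]
        obtain ⟨hm2top, hρ0, hm⟩ := hSfacts ω hω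
        have hgt := hg_gt ω hω
        have hdd1 : dd (ρ.2 (m2 ω) ω) (ρ.2 (m2 ω) ω) + dd (m2 ω) (m2 ω + δ') = δ' := by
          simp only [dd, tsub_self, add_zero, zero_add]
          rw [tsub_eq_zero_of_le le_self_add, ENNReal.add_sub_cancel_left hm2top, zero_add]
        have hest1 : |U1 (ρ.2 (m2 ω) ω) (m2 ω) ω - U1 (ρ.2 (m2 ω) ω) (m2 ω + δ') ω| ≤ r δ' := by
          have h1 := hmod (ρ.2 (m2 ω) ω) (m2 ω) (ρ.2 (m2 ω) ω) (m2 ω + δ') ω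
          rwa [hdd1] at h1
        have hdd2 : dd (ρ.2 (m2 ω) ω) (max (ρ.2 (m2 ω) ω) (m2 ω + δ'))
            + dd (m2 ω + δ') (m2 ω + δ') ≤ δ' := by
          simp only [dd, tsub_self, add_zero]
          rcases le_total (m2 ω + δ') (ρ.2 (m2 ω) ω) with hc | hc
          · rw [max_eq_left hc]
            simp
          · rw [max_eq_right hc, tsub_eq_zero_of_le hc, zero_add]
            calc m2 ω + δ' - ρ.2 (m2 ω) ω ≤ m2 ω + δ' - m2 ω := tsub_le_tsub_left hgt.le _
              _ = δ' := ENNReal.add_sub_cancel_left hm2top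
        have hest2 : |U1 (ρ.2 (m2 ω) ω) (m2 ω + δ') ω
            - U1 (max (ρ.2 (m2 ω) ω) (m2 ω + δ')) (m2 ω + δ') ω| ≤ r δ' :=
          le_trans (hmod _ _ _ _ ω) (hrmono hdd2)
        have h1 := (abs_le.mp hest1).2
        have h2 := (abs_le.mp hest2).2
        linarith
      · rw [Set.indicator_of_notMem hω, Set.indicator_of_notMem hω]
        linarith
    calc (∫ ω, S.indicator (fun ω' => U1 (ρ.2 (m2 ω') ω') (m2 ω') ω') ω ∂μ)
        ≤ ∫ ω, (S.indicator
            (fun ω' => U1 (max (ρ.2 (m2 ω') ω') (m2 ω' + δ')) (m2 ω' + δ') ω') ω + 2*ε) ∂μ :=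
          integral_mono hF0int (hF1int.add (integrable_const _)) hpt
      _ = (∫ ω, S.indicator
            (fun ω' => U1 (max (ρ.2 (m2 ω') ω') (m2 ω' + δ')) (m2 ω' + δ') ω') ω ∂μ) + 2*ε := by
          rw [integral_add hF1int (integrable_const _), integral_const]
          simp
  -- Step C : `∫ 1_S Y(m2+δ') ≤ ∫ 1_S Y(m2) + ε`
  have hstepC : (∫ ω, S.indicator (fun ω' => Y1v μ 𝓕 U1 (m2 ω' + δ') ω') ω ∂μ)
      ≤ (∫ ω, S.indicator (fun ω' => Y1v μ 𝓕 U1 (m2 ω') ω') ω ∂μ) + ε := by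
    have hpt : ∀ ω, S.indicator (fun ω' => Y1v μ 𝓕 U1 (m2 ω' + δ') ω') ω
        ≤ S.indicator (fun ω' => Y1v μ 𝓕 U1 (m2 ω') ω') ω
          + |Y1v μ 𝓕 U1 (m2 ω + δ') ω - Y1v μ 𝓕 U1 (m2 ω) ω| := by
      intro ω
      by_cases hω : ω ∈ S
      · rw [Set.indicator_of_mem hω, Set.indicator_of_mem hω]
        have := abs_le.mp (le_refl |Y1v μ 𝓕 U1 (m2 ω + δ') ω - Y1v μ 𝓕 U1 (m2 ω) ω|)
        have h1 := le_abs_self (Y1v μ 𝓕 U1 (m2 ω + δ') ω - Y1v μ 𝓕 U1 (m2 ω) ω)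
        linarith
      · rw [Set.indicator_of_notMem hω, Set.indicator_of_notMem hω]
        simp [abs_nonneg]
    calc (∫ ω, S.indicator (fun ω' => Y1v μ 𝓕 U1 (m2 ω' + δ') ω') ω ∂μ)
        ≤ ∫ ω, (S.indicator (fun ω' => Y1v μ 𝓕 U1 (m2 ω') ω') ω
            + |Y1v μ 𝓕 U1 (m2 ω + δ') ω - Y1v μ 𝓕 U1 (m2 ω) ω|) ∂μ :=
          integral_mono hF2int (hF3int.add hFdint) hpt
      _ = (∫ ω, S.indicator (fun ω' => Y1v μ 𝓕 U1 (m2 ω') ω') ω ∂μ)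
          + ∫ ω, |Y1v μ 𝓕 U1 (m2 ω + δ') ω - Y1v μ 𝓕 U1 (m2 ω) ω| ∂μ :=
          integral_add hF3int hFdint
      _ ≤ _ := by linarith [hYδ]
  -- Step B : `∫ 1_S U1(s, m2+δ') ≤ ∫ 1_S Y(m2+δ')`
  have hstepB : (∫ ω, S.indicator
        (fun ω' => U1 (max (ρ.2 (m2 ω') ω') (m2 ω' + δ')) (m2 ω' + δ') ω') ω ∂μ)
      ≤ ∫ ω, S.indicator (fun ω' => Y1v μ 𝓕 U1 (m2 ω' + δ') ω') ω ∂μ := by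
    rw [integral_indicator hSmeas, integral_indicator hSmeas]
    haveI : Countable ↥(Set.range m2) := (Set.countable_range m2).to_subtype
    set B : ↥(Set.range m2) → Set Ω := fun t => S ∩ {ω | m2 ω = t.1} with hBdef
    have hBmeas : ∀ t, MeasurableSet (B t) := by
      intro t
      exact hSmeas.inter ((measurable_of_rel hrel_m2) (measurableSet_singleton t.1))
    have hBdisj : Pairwise (Function.onFun Disjoint B) := by
      intro t t' htt'
      refine Set.disjoint_left.mpr fun ω hω hω' => ?_
      exact htt' (Subtype.ext (hω.2.symm.trans hω'.2))
    have hBunion : (⋃ t, B t) = S := by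
      ext ω
      simp only [Set.mem_iUnion, hBdef, Set.mem_inter_iff, Set.mem_setOf_eq]
      constructor
      · rintro ⟨t, ht, -⟩; exact ht
      · intro hω; exact ⟨⟨m2 ω, Set.mem_range_self ω⟩, hω, rfl⟩
    have hF1int' : IntegrableOn
        (fun ω => U1 (max (ρ.2 (m2 ω) ω) (m2 ω + δ')) (m2 ω + δ') ω) (⋃ t, B t) μ :=
      (integrable_of_bound hF1meas (M := M) fun ω => hM _ _ _).integrableOn
    have hF2int' : IntegrableOn (fun ω => Y1v μ 𝓕 U1 (m2 ω + δ') ω) (⋃ t, B t) μ :=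
      (integrable_of_bound hF2meas (M := M) fun ω => hY_bdd _ _).integrableOn
    have hsum1 := hasSum_integral_iUnion hBmeas hBdisj hF1int'
    have hsum2 := hasSum_integral_iUnion hBmeas hBdisj hF2int'
    rw [hBunion] at hsum1 hsum2
    rw [← hsum1.tsum_eq, ← hsum2.tsum_eq]
    refine Summable.tsum_le_tsum ?_ hsum1.summable hsum2.summable
    intro t
    rcases Set.eq_empty_or_nonempty (B t) with hBe | ⟨ω₀, hω₀⟩
    · rw [hBe]; simp
    -- nonempty case
    have ht_top : t.1 ≠ ∞ := by
      rw [← hω₀.2]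
      exact (hSfacts ω₀ hω₀.1).1
    set c : ℝ≥0∞ := t.1 + δ' with hcdef
    have hc_top : c ≠ ∞ := ENNReal.add_ne_top.mpr ⟨ht_top, hδ'top⟩
    have hBt_eq : B t = ({ω | m2 ω ≤ t.1} ∩ ({ω | m2 ω < t.1})ᶜ)
        ∩ (({ω | m1 ω ≤ t.1})ᶜ ∩ ({ω | ρ.1 ω < c})ᶜ) := by
      ext ω
      simp only [hBdef, Set.mem_inter_iff, Set.mem_setOf_eq, Set.mem_compl_iff, not_lt, not_le,
        hSdef]
      constructor
      · rintro ⟨⟨h1, h2⟩, h3⟩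
        have hinf : m1 ω ⊓ m2 ω = m2 ω := inf_eq_right.mpr h2.le
        rw [hinf, h3] at h1
        exact ⟨⟨h3.le, h3.ge⟩, by rw [← h3]; exact h2, h1⟩
      · rintro ⟨⟨h1, h2⟩, h3, h4⟩
        have h5 : m2 ω = t.1 := le_antisymm h1 h2
        have h6 : m2 ω < m1 ω := by rw [h5]; exact h3
        have hinf : m1 ω ⊓ m2 ω = m2 ω := inf_eq_right.mpr h6.le
        exact ⟨⟨by rw [hinf, h5]; exact h4, h6⟩, h5⟩
    have hBtF : MeasurableSet[𝓕 c] (B t) := by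
      rw [hBt_eq]
      have hle : (𝓕 t.1 : MeasurableSpace Ω) ≤ 𝓕 c := 𝓕.mono le_self_add
      exact ((hle _ (hm2le t.1)).inter (hle _ (hm2lt t.1)).compl).inter
        ((hle _ (hm1le t.1)).compl.inter (measurableSet_lt_stopping hρst.1 c).compl)
    -- the stopping time
    set σ : Ω → ℝ≥0∞ := fun ω => if ω ∈ B t then max (ρ.2 t.1 ω) c else ∞ with hσdef
    have hσ_ge : ∀ ω, c ≤ σ ω := by
      intro ω
      simp only [hσdef]
      by_cases hω : ω ∈ B t
      · rw [if_pos hω]; exact le_max_right _ _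
      · rw [if_neg hω]; exact le_top
    have hσ_st : IsStoppingTime 𝓕 (fun ω => (σ ω : WithTop ℝ≥0∞)) := by
      refine st_of_le ?_
      intro u
      rcases eq_or_ne u ∞ with hu | hu
      · have : {ω | σ ω ≤ u} = Set.univ := by
          ext ω; simp [hu]
        rw [this]; exact MeasurableSet.univ
      by_cases hcu : c ≤ u
      · have heq : {ω | σ ω ≤ u} = B t ∩ {ω | ρ.2 t.1 ω ≤ u} := by
          ext ω
          simp only [Set.mem_setOf_eq, Set.mem_inter_iff, hσdef]
          by_cases hω : ω ∈ B t
          · rw [if_pos hω]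
            simp only [max_le_iff]
            exact ⟨fun hh => ⟨hω, hh.1⟩, fun hh => ⟨hh.2, hcu⟩⟩
          · rw [if_neg hω]
            simp only [top_le_iff]
            exact ⟨fun hh => absurd hh hu, fun hh => absurd hh.1 hω⟩
        rw [heq]
        exact @MeasurableSet.inter Ω (𝓕 u) _ _ (𝓕.mono hcu _ hBtF) (st_le (hρst.2.2 t.1 ht_top).1 u)
      · have heq : {ω | σ ω ≤ u} = (∅ : Set Ω) := by
          ext ω
          simp only [Set.mem_setOf_eq, Set.mem_empty_iff_false, iff_false, not_le]
          exact lt_of_lt_of_le (not_le.mp hcu) (hσ_ge ω)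
        rw [heq]; exact @MeasurableSet.empty Ω (𝓕 u)
    have hσ_mem : σ ∈ STge 𝓕 (fun _ => c) := ⟨hσ_st, hσ_ge⟩
    have hσ_rel : ∀ a b, rel mΩ a b → σ a = σ b := by
      intro a b hr
      simp only [hσdef]
      have hmem : a ∈ B t ↔ b ∈ B t :=
        hr (B t) (hBmeas t)
      by_cases ha : a ∈ B t
      · rw [if_pos ha, if_pos (hmem.mp ha), hrel_ρ2 t.1 a b hr]
      · rw [if_neg ha, if_neg (fun hb => ha (hmem.mpr hb))]
    have hfσmeas : Measurable fun ω => U1 (σ ω) c ω := hUcomp_meas σ hσ_rel c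
    have hfσint : Integrable (fun ω => U1 (σ ω) c ω) μ :=
      integrable_of_bound hfσmeas (fun ω => hM _ _ _)
    have hcond := setIntegral_condExp (𝓕.le c) hfσint hBtF
    have hY2int : Integrable (Y1v μ 𝓕 U1 c) μ :=
      integrable_of_bound (measurable_of_rel (fun a b hr => hY_rel c a b hr))
        (fun ω => hY_bdd _ _)
    calc (∫ ω in B t, U1 (max (ρ.2 (m2 ω) ω) (m2 ω + δ')) (m2 ω + δ') ω ∂μ)
        = ∫ ω in B t, U1 (σ ω) c ω ∂μ := by
          refine setIntegral_congr_fun (hBmeas t) fun ω hω => ?_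
          have hm2ω : m2 ω = t.1 := hω.2
          simp only [hσdef]
          rw [if_pos hω, hm2ω]
      _ = ∫ ω in B t, (μ[fun ω' => U1 (σ ω') c ω'|𝓕 c]) ω ∂μ := hcond.symm
      _ ≤ ∫ ω in B t, Y1v μ 𝓕 U1 c ω ∂μ := by
          refine setIntegral_mono_on (integrable_condExp.integrableOn)
            (hY2int.integrableOn) (hBmeas t) fun ω hω => ?_
          exact hY_le c ⟨σ, hσ_mem⟩ ω
      _ = ∫ ω in B t, Y1v μ 𝓕 U1 (m2 ω + δ') ω ∂μ := by
          refine setIntegral_congr_fun (hBmeas t) fun ω hω => ?_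
          rw [hω.2]
  refine ⟨hpart1, ?_, hpart3⟩
  calc (∫ ω, S.indicator (fun ω' => U1 (ρ.2 (m2 ω') ω') (m2 ω') ω') ω ∂μ)
      ≤ (∫ ω, S.indicator
          (fun ω' => U1 (max (ρ.2 (m2 ω') ω') (m2 ω' + δ')) (m2 ω' + δ') ω') ω ∂μ) + 2*ε :=
        hstepA
    _ ≤ (∫ ω, S.indicator (fun ω' => Y1v μ 𝓕 U1 (m2 ω' + δ') ω') ω ∂μ) + 2*ε := by
        linarith [hstepB]
    _ ≤ (∫ ω, S.indicator (fun ω' => Y1v μ 𝓕 U1 (m2 ω') ω') ω ∂μ) + 3*ε := by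
        linarith [hstepC]


end StoppingGames
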